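/- Let B be the formal power series over ℚ with B = ∑_{n≥0} binom(2n,n) z^n. For every n ≥ 0, the coefficient of z^n in B³ equals (2n+1)·binom(2n,n). (This counts the vertices of toggle trees: (z·BC)′ = B³.) -/

import Mathlib

open PowerSeries Finset

/-- The central binomial generating function `B = ∑ binom(2n,n) zⁿ` over `ℚ`. -/
noncomputable def Bgf : PowerSeries ℚ := PowerSeries.mk fun n => ((2 * n).choose n : ℚ)
/-- The Catalan generating function `C = ∑ Cₙ zⁿ` over `ℚ`. -/
noncomputable def Cgf : PowerSeries ℚ := PowerSeries.mk fun n => (catalan n : ℚ)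

lemma hC : Cgf = 1 + X * Cgf ^ 2 := by
  ext n
  cases n with
  | zero => simp [Cgf, coeff_zero_eq_constantCoeff]
  | succ n =>
    rw [map_add, coeff_succ_X_mul]
    simp only [Cgf, coeff_mk, pow_two, coeff_mul, coeff_one]
    rw [catalan_succ']
    push_cast
    simp

lemma hB : Bgf = d⁄dX ℚ (X * Cgf) := by
  ext n
  rw [coeff_derivative, coeff_succ_X_mul]
  simp only [Bgf, Cgf, coeff_mk]
  have h := succ_mul_catalan_eq_centralBinom n
  rw [Nat.centralBinom_eq_two_mul_choose] at h
  rw [← h]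
  push_cast
  ring

lemma hC' : d⁄dX ℚ Cgf = Cgf ^ 2 + 2 * X * Cgf * d⁄dX ℚ Cgf := by
  nth_rewrite 1 [hC]
  rw [map_add, Derivation.map_one_eq_zero]
  rw [Derivation.leibniz, Derivation.leibniz_pow]
  simp [smul_eq_mul]
  ring

lemma hU : Bgf * (1 - 2 * X * Cgf) = 1 := by
  have h1 := hC
  have h2 := hC'
  have h3 : Bgf = Cgf + X * d⁄dX ℚ Cgf := by
    rw [hB, Derivation.leibniz]
    simp [smul_eq_mul]; ring
  linear_combination h1 + X * h2 + (1 - 2*X*Cgf) * h3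

lemma hDU : d⁄dX ℚ (1 - 2 * X * Cgf) = -(2 * Bgf) := by
  have h : (1 - 2 * X * Cgf : PowerSeries ℚ) = 1 - (X * Cgf + X * Cgf) := by ring
  rw [h, map_sub, Derivation.map_one_eq_zero, map_add, ← hB]
  ring

lemma hB' : d⁄dX ℚ Bgf = 2 * Bgf ^ 3 := by
  have h0 := congrArg (d⁄dX ℚ) hU
  rw [Derivation.leibniz, hDU, Derivation.map_one_eq_zero, smul_eq_mul, smul_eq_mul] at h0
  linear_combination Bgf * h0 - (d⁄dX ℚ Bgf) * hU

/-- `[zⁿ] B³ = (2n+1)·binom(2n,n)`; this counts the vertices of toggle trees,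
since `(z·BC)′ = B³`. -/
theorem stmt5 :
    (∀ n : ℕ, PowerSeries.coeff n (Bgf ^ 3) =
      ((2 * n + 1 : ℕ) : ℚ) * ((2 * n).choose n : ℚ)) ∧
    d⁄dX ℚ (PowerSeries.X * (Bgf * Cgf)) = Bgf ^ 3 := by
  constructor
  · intro n
    have hB'' : d⁄dX ℚ Bgf = Bgf ^ 3 + Bgf ^ 3 := by rw [hB']; ring
    have h6 := congrArg (coeff n) hB''
    rw [coeff_derivative, map_add] at h6
    have hcoeff : coeff (n + 1) Bgf = ((2 * (n + 1)).choose (n + 1) : ℚ) := by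
      simp [Bgf]
    rw [hcoeff] at h6
    have hnat := Nat.succ_mul_centralBinom_succ n
    rw [Nat.centralBinom_eq_two_mul_choose, Nat.centralBinom_eq_two_mul_choose] at hnat
    have hcast : ((n : ℚ) + 1) * ((2 * (n + 1)).choose (n + 1) : ℚ)
        = 2 * (2 * (n : ℚ) + 1) * ((2 * n).choose n : ℚ) := by
      exact_mod_cast congrArg (Nat.cast : ℕ → ℚ) hnat
    push_cast
    linear_combination hcast / 2 - h6 / 2
  · have h4 : X * (Bgf * Cgf) + X * (Bgf * Cgf) = Bgf - 1 := by linear_combination -hU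
    have h5 := congrArg (d⁄dX ℚ) h4
    rw [map_add, map_sub, Derivation.map_one_eq_zero, hB'] at h5
    have h2ne : (2 : PowerSeries ℚ) ≠ 0 := by
      intro h
      have h2 := congrArg (constantCoeff) h
      rw [map_ofNat, map_zero] at h2
      norm_num at h2
    apply mul_left_cancel₀ h2ne
    linear_combination h5
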